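/- Every continuous bilinear form A : c₀ × c₀ → ℝ is 2-dominated: there is a constant C ≥ 0 such that ∑_{k=1}^N |A(x_k, y_k)| ≤ C ‖(x_k)_{k=1}^N‖_{w,2} ‖(y_k)_{k=1}^N‖_{w,2} for all finite families x_1,…,x_N, y_1,…,y_N in c₀. -/

import Mathlib

open scoped BigOperators ZeroAtInfty
open Finset

/-- The weak ℓ_p norm of a finite family `x` in a real normed space `E`. -/
noncomputable def weakNorm {E : Type*} [NormedAddCommGroup E] [NormedSpace ℝ E]
    (p : ℝ) {m : ℕ} (x : Fin m → E) : ℝ :=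
  ⨆ φ : {φ : E →L[ℝ] ℝ // ‖φ‖ ≤ 1}, (∑ j, ‖φ.1 (x j)‖ ^ p) ^ (1 / p)

namespace GrothAux

/-- the sign of a boolean, as a real number -/
def sg (b : Bool) : ℝ := if b then 1 else -1

lemma sg_mul_self (b : Bool) : sg b * sg b = 1 := by cases b <;> simp [sg]

lemma sg_not (b : Bool) : sg (!b) = - sg b := by cases b <;> simp [sg]

set_option linter.unusedSectionVars false

variable {ι : Type} [Fintype ι] [DecidableEq ι]

lemma sum_sg_mul (a : ι) (h : (ι → Bool) → ℝ)
    (hh : ∀ ε b, h (Function.update ε a b) = h ε) :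
    ∑ ε : ι → Bool, sg (ε a) * h ε = 0 := by
  have hinv : Function.Involutive (fun ε : ι → Bool => Function.update ε a (!(ε a))) := by
    intro ε
    funext z
    by_cases hz : z = a
    · subst hz; simp
    · simp [Function.update_of_ne hz]
  have key := Equiv.sum_comp hinv.toPerm (fun ε => sg (ε a) * h ε)
  simp only [Function.Involutive.coe_toPerm] at key
  have lhs : ∀ ε : ι → Bool,
      sg (Function.update ε a (!(ε a)) a) * h (Function.update ε a (!(ε a)))
        = - (sg (ε a) * h ε) := by
    intro ε
    rw [Function.update_self, hh, sg_not]
    ring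
  rw [Finset.sum_congr rfl (fun ε _ => lhs ε)] at key
  rw [Finset.sum_neg_distrib] at key
  linarith

/-- partial Rademacher sum -/
def rads (s : Finset ι) (w : ι → ℝ) (ε : ι → Bool) : ℝ := ∑ z ∈ s, sg (ε z) * w z

lemma rads_update {s : Finset ι} {a : ι} (ha : a ∉ s) (w : ι → ℝ) (ε : ι → Bool) (b : Bool) :
    rads s w (Function.update ε a b) = rads s w ε :=
  Finset.sum_congr rfl fun z hz => by
    have hza : z ≠ a := fun h => ha (by rw [← h]; exact hz)
    rw [Function.update_of_ne hza]

lemma card_fun_bool : (((Finset.univ : Finset (ι → Bool)).card : ℝ)) = 2 ^ (Fintype.card ι) := by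
  rw [Finset.card_univ, Fintype.card_fun]
  push_cast
  norm_num

lemma sum_rads_mul (w v : ι → ℝ) (s : Finset ι) :
    ∑ ε : ι → Bool, rads s w ε * rads s v ε
      = 2 ^ (Fintype.card ι) * ∑ z ∈ s, w z * v z := by
  induction s using Finset.induction_on with
  | empty => simp [rads]
  | @insert a s ha ih =>
    have hexp : ∀ ε : ι → Bool,
        rads (insert a s) w ε * rads (insert a s) v ε
          = w a * v a + sg (ε a) * (w a * rads s v ε + v a * rads s w ε)
            + rads s w ε * rads s v ε := by
      intro ε
      have hins : ∀ u : ι → ℝ, rads (insert a s) u ε = sg (ε a) * u a + rads s u ε :=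
        fun u => Finset.sum_insert ha
      rw [hins w, hins v]
      cases h : ε a <;> norm_num [sg] <;> ring
    rw [Finset.sum_congr rfl (fun ε _ => hexp ε)]
    rw [Finset.sum_add_distrib, Finset.sum_add_distrib]
    rw [Finset.sum_const, sum_sg_mul a _ (fun ε b => by simp only [rads_update ha]),
      ih, Finset.sum_insert ha]
    rw [nsmul_eq_mul, card_fun_bool]
    ring

lemma sum_rads_pow_four (w : ι → ℝ) (s : Finset ι) :
    ∑ ε : ι → Bool, (rads s w ε) ^ 4
      ≤ 3 * 2 ^ (Fintype.card ι) * (∑ z ∈ s, w z ^ 2) ^ 2 := by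
  induction s using Finset.induction_on with
  | empty =>
    simp [rads]
  | @insert a s ha ih =>
    have hexp : ∀ ε : ι → Bool,
        (rads (insert a s) w ε) ^ 4
          = w a ^ 4 + 6 * w a ^ 2 * (rads s w ε * rads s w ε) + (rads s w ε) ^ 4
            + sg (ε a) * (4 * w a ^ 3 * rads s w ε + 4 * w a * (rads s w ε) ^ 3) := by
      intro ε
      have hins : rads (insert a s) w ε = sg (ε a) * w a + rads s w ε :=
        Finset.sum_insert ha
      rw [hins]
      cases h : ε a <;> norm_num [sg] <;> ring
    rw [Finset.sum_congr rfl (fun ε _ => hexp ε)]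
    rw [Finset.sum_add_distrib, Finset.sum_add_distrib, Finset.sum_add_distrib]
    rw [Finset.sum_const, ← Finset.mul_sum, sum_rads_mul,
      sum_sg_mul a _ (fun ε b => by simp only [rads_update ha]),
      Finset.sum_insert ha, nsmul_eq_mul, card_fun_bool]
    have hsq : ∑ z ∈ s, w z * w z = ∑ z ∈ s, w z ^ 2 :=
      Finset.sum_congr rfl fun z _ => (sq (w z)).symm
    rw [hsq]
    have hpos : (0:ℝ) ≤ 2 ^ Fintype.card ι * w a ^ 4 := by positivity
    have hexp2 : 3 * (2:ℝ) ^ Fintype.card ι * (w a ^ 2 + ∑ z ∈ s, w z ^ 2) ^ 2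
        = 2 ^ Fintype.card ι * w a ^ 4
          + 6 * w a ^ 2 * (2 ^ Fintype.card ι * ∑ z ∈ s, w z ^ 2)
          + 3 * 2 ^ Fintype.card ι * (∑ z ∈ s, w z ^ 2) ^ 2
          + 2 * (2 ^ Fintype.card ι * w a ^ 4) := by ring
    linarith [ih]


section GS

variable {n m : ℕ}

/-- weighted dot product -/
def dotw {κ : Type} [Fintype κ] (c u v : κ → ℝ) : ℝ := ∑ z, c z * (u z * v z)

/-- The set of values `∑ i j, a i j ⟪u i, v j⟫` over all weighted finite-dimensional
"Hilbert spaces" and families of vectors of norm at most 1. -/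
def GS (a : Fin n → Fin m → ℝ) : Set ℝ :=
  {r | ∃ (d : ℕ) (c : Fin d → ℝ) (u : Fin n → Fin d → ℝ) (v : Fin m → Fin d → ℝ),
    (∀ z, 0 ≤ c z) ∧ (∀ i, dotw c (u i) (u i) ≤ 1) ∧ (∀ j, dotw c (v j) (v j) ≤ 1) ∧
    r = ∑ i, ∑ j, a i j * dotw c (u i) (v j)}

lemma mem_GS {a : Fin n → Fin m → ℝ} (ι : Type) [Fintype ι] (c : ι → ℝ)
    (u : Fin n → ι → ℝ) (v : Fin m → ι → ℝ) (h0 : ∀ z, 0 ≤ c z)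
    (hu : ∀ i, dotw c (u i) (u i) ≤ 1) (hv : ∀ j, dotw c (v j) (v j) ≤ 1) :
    (∑ i, ∑ j, a i j * dotw c (u i) (v j)) ∈ GS a := by
  obtain e := Fintype.equivFin ι
  have key : ∀ f g : ι → ℝ,
      dotw (c ∘ e.symm) (f ∘ e.symm) (g ∘ e.symm) = dotw c f g := fun f g =>
    Equiv.sum_comp e.symm (fun z => c z * (f z * g z))
  refine ⟨Fintype.card ι, c ∘ e.symm, fun i => u i ∘ e.symm, fun j => v j ∘ e.symm,
    fun z => h0 _, fun i => by rw [key]; exact hu i, fun j => by rw [key]; exact hv j, ?_⟩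
  exact (Finset.sum_congr rfl fun i _ => Finset.sum_congr rfl fun j _ => by rw [key]).symm

lemma zero_mem_GS (a : Fin n → Fin m → ℝ) : (0:ℝ) ∈ GS a := by
  refine ⟨0, 0, 0, 0, fun z => le_rfl, ?_, ?_, ?_⟩ <;>
    simp [dotw]

lemma dotw_nonneg {κ : Type} [Fintype κ] {c u : κ → ℝ} (h0 : ∀ z, 0 ≤ c z) :
    0 ≤ dotw c u u :=
  Finset.sum_nonneg fun z _ => mul_nonneg (h0 z) (mul_self_nonneg _)

lemma abs_dotw_le {κ : Type} [Fintype κ] {c u v : κ → ℝ} (h0 : ∀ z, 0 ≤ c z)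
    (hu : dotw c u u ≤ 1) (hv : dotw c v v ≤ 1) : |dotw c u v| ≤ 1 := by
  have cs := Finset.sum_mul_sq_le_sq_mul_sq Finset.univ
    (fun z => Real.sqrt (c z) * u z) (fun z => Real.sqrt (c z) * v z)
  have h1 : ∑ z, (Real.sqrt (c z) * u z) * (Real.sqrt (c z) * v z) = dotw c u v :=
    Finset.sum_congr rfl fun z _ => by
      rw [show (Real.sqrt (c z) * u z) * (Real.sqrt (c z) * v z)
        = (Real.sqrt (c z) * Real.sqrt (c z)) * (u z * v z) by ring,
        Real.mul_self_sqrt (h0 z)]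
  have h2 : ∑ z, (Real.sqrt (c z) * u z) ^ 2 = dotw c u u :=
    Finset.sum_congr rfl fun z _ => by
      rw [show (Real.sqrt (c z) * u z) ^ 2
        = (Real.sqrt (c z) * Real.sqrt (c z)) * (u z * u z) by ring,
        Real.mul_self_sqrt (h0 z)]
  have h3 : ∑ z, (Real.sqrt (c z) * v z) ^ 2 = dotw c v v :=
    Finset.sum_congr rfl fun z _ => by
      rw [show (Real.sqrt (c z) * v z) ^ 2
        = (Real.sqrt (c z) * Real.sqrt (c z)) * (v z * v z) by ring,
        Real.mul_self_sqrt (h0 z)]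
  rw [h1, h2, h3] at cs
  have huu := dotw_nonneg (u := u) h0
  have hvv := dotw_nonneg (u := v) h0
  rw [abs_le]
  constructor <;> nlinarith [cs]

lemma GS_val_le {a : Fin n → Fin m → ℝ} {r : ℝ} (hr : r ∈ GS a) :
    r ≤ ∑ i, ∑ j, |a i j| := by
  obtain ⟨d, c, u, v, h0, hu, hv, rfl⟩ := hr
  refine Finset.sum_le_sum fun i _ => Finset.sum_le_sum fun j _ => ?_
  calc a i j * dotw c (u i) (v j) ≤ |a i j * dotw c (u i) (v j)| := le_abs_self _
    _ = |a i j| * |dotw c (u i) (v j)| := abs_mul _ _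
    _ ≤ |a i j| * 1 := by
        exact mul_le_mul_of_nonneg_left (abs_dotw_le h0 (hu i) (hv j)) (abs_nonneg _)
    _ = |a i j| := mul_one _

lemma GS_bddAbove (a : Fin n → Fin m → ℝ) : BddAbove (GS a) :=
  ⟨∑ i, ∑ j, |a i j|, fun _ hr => GS_val_le hr⟩

end GS


section Trunc

/-- truncation at level `R` -/
def trunc (R t : ℝ) : ℝ := max (-R) (min R t)

lemma abs_trunc_le {R : ℝ} (hR : 0 < R) (t : ℝ) : |trunc R t| ≤ R := by
  rw [abs_le]
  exact ⟨le_max_left _ _, max_le (by linarith) (min_le_left _ _)⟩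

lemma trunc_cases {R : ℝ} (t : ℝ) (hR : 0 < R) :
    (t ≤ -R ∧ trunc R t = -R) ∨ (-R ≤ t ∧ t ≤ R ∧ trunc R t = t) ∨
      (R ≤ t ∧ trunc R t = R) := by
  rcases le_total t (-R) with h | h
  · exact Or.inl ⟨h, by rw [trunc, min_eq_right (by linarith), max_eq_left h]⟩
  · rcases le_total t R with h' | h'
    · exact Or.inr (Or.inl ⟨h, h', by rw [trunc, min_eq_right h', max_eq_right h]⟩)
    · exact Or.inr (Or.inr ⟨h', by rw [trunc, min_eq_left h', max_eq_right (by linarith)]⟩)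

lemma sq_trunc_le {R : ℝ} (t : ℝ) (hR : 0 < R) : (trunc R t) ^ 2 ≤ t ^ 2 := by
  rcases trunc_cases t hR with ⟨h, he⟩ | ⟨h1, h2, he⟩ | ⟨h, he⟩ <;> rw [he] <;> nlinarith

lemma sq_sub_trunc_le {R : ℝ} (t : ℝ) (hR : 0 < R) :
    R ^ 2 * (t - trunc R t) ^ 2 ≤ t ^ 4 := by
  rcases trunc_cases t hR with ⟨h, he⟩ | ⟨h1, h2, he⟩ | ⟨h, he⟩ <;> rw [he]
  · have f1 : 0 ≤ t ^ 2 - R * (t + R) := by nlinarith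
    have f2 : 0 ≤ t ^ 2 + R * (t + R) := by nlinarith [sq_nonneg (t + R / 2)]
    nlinarith [mul_nonneg f1 f2]
  · have : t - t = 0 := sub_self t
    rw [this]
    have : (0:ℝ) ≤ t ^ 4 := by positivity
    nlinarith
  · have f1 : 0 ≤ t ^ 2 - R * (t - R) := by nlinarith [sq_nonneg (t - R / 2)]
    have f2 : 0 ≤ t ^ 2 + R * (t - R) := by nlinarith
    nlinarith [mul_nonneg f1 f2]

end Trunc

section Boot

variable {n m : ℕ}

lemma sum_sqrt_mul {κ : Type} [Fintype κ] {c : κ → ℝ} (h0 : ∀ z, 0 ≤ c z) (f g : κ → ℝ) :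
    ∑ z, (Real.sqrt (c z) * f z) * (Real.sqrt (c z) * g z) = dotw c f g :=
  Finset.sum_congr rfl fun z _ => by
    rw [show (Real.sqrt (c z) * f z) * (Real.sqrt (c z) * g z)
      = (Real.sqrt (c z) * Real.sqrt (c z)) * (f z * g z) by ring,
      Real.mul_self_sqrt (h0 z)]

lemma sum_swap3 {α β γ : Type} [Fintype α] [Fintype β] [Fintype γ] (F : α → β → γ → ℝ) :
    ∑ i, ∑ j, ∑ k, F i j k = ∑ k, ∑ i, ∑ j, F i j k := by
  calc ∑ i, ∑ j, ∑ k, F i j k = ∑ i, ∑ k, ∑ j, F i j k :=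
        Finset.sum_congr rfl fun i _ => Finset.sum_comm
    _ = ∑ k, ∑ i, ∑ j, F i j k := Finset.sum_comm

lemma GS_le_boot {a : Fin n → Fin m → ℝ} {M K : ℝ}
    (hM : ∀ (s : Fin n → ℝ) (t : Fin m → ℝ), (∀ i, |s i| ≤ 1) → (∀ j, |t j| ≤ 1) →
      |∑ i, ∑ j, a i j * (s i * t j)| ≤ M)
    (hK : ∀ r' ∈ GS a, r' ≤ K) :
    ∀ r ∈ GS a, r ≤ 48 * M + K / 2 := by
  intro r hr
  obtain ⟨d, c, u, v, h0, hu, hv, rfl⟩ := hr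
  set R : ℝ := 4 * Real.sqrt 3 with hRdef
  have hR : 0 < R := by rw [hRdef]; positivity
  have hRne : R ≠ 0 := ne_of_gt hR
  have hR2 : R ^ 2 = 48 := by
    rw [hRdef, mul_pow, Real.sq_sqrt (by norm_num : (0:ℝ) ≤ 3)]
    norm_num
  set D : ℝ := 2 ^ d with hD
  have hDpos : (0:ℝ) < D := by rw [hD]; positivity
  have hDne : D ≠ 0 := ne_of_gt hDpos
  set Φ : Fin n → (Fin d → Bool) → ℝ :=
    fun i => rads Finset.univ (fun z => Real.sqrt (c z) * u i z) with hΦ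
  set Ψ : Fin m → (Fin d → Bool) → ℝ :=
    fun j => rads Finset.univ (fun z => Real.sqrt (c z) * v j z) with hΨ
  have hcard : ((Finset.univ : Finset (Fin d → Bool)).card : ℝ) = D := by
    rw [card_fun_bool, Fintype.card_fin, hD]
  -- second moments
  have M2 : ∀ i j, ∑ ε : Fin d → Bool, Φ i ε * Ψ j ε = D * dotw c (u i) (v j) := by
    intro i j
    rw [hΦ, hΨ]
    have h1 := sum_rads_mul (ι := Fin d) (fun z => Real.sqrt (c z) * u i z)
      (fun z => Real.sqrt (c z) * v j z) Finset.univ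
    rw [Fintype.card_fin, sum_sqrt_mul h0 (u i) (v j)] at h1
    rw [h1, hD]
  have M2u : ∀ i, ∑ ε : Fin d → Bool, Φ i ε * Φ i ε = D * dotw c (u i) (u i) := by
    intro i
    rw [hΦ]
    have h1 := sum_rads_mul (ι := Fin d) (fun z => Real.sqrt (c z) * u i z)
      (fun z => Real.sqrt (c z) * u i z) Finset.univ
    rw [Fintype.card_fin, sum_sqrt_mul h0 (u i) (u i)] at h1
    rw [h1, hD]
  have M2v : ∀ j, ∑ ε : Fin d → Bool, Ψ j ε * Ψ j ε = D * dotw c (v j) (v j) := by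
    intro j
    rw [hΨ]
    have h1 := sum_rads_mul (ι := Fin d) (fun z => Real.sqrt (c z) * v j z)
      (fun z => Real.sqrt (c z) * v j z) Finset.univ
    rw [Fintype.card_fin, sum_sqrt_mul h0 (v j) (v j)] at h1
    rw [h1, hD]
  -- fourth moments
  have sqsum : ∀ (f : Fin d → ℝ), ∑ z, (Real.sqrt (c z) * f z) ^ 2 = dotw c f f := by
    intro f
    rw [← sum_sqrt_mul h0 f f]
    exact Finset.sum_congr rfl fun z _ => sq _
  have M4u : ∀ i, ∑ ε : Fin d → Bool, (Φ i ε) ^ 4 ≤ 3 * D := by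
    intro i
    have h1 := sum_rads_pow_four (ι := Fin d) (fun z => Real.sqrt (c z) * u i z) Finset.univ
    rw [Fintype.card_fin, sqsum (u i)] at h1
    have h2 : 0 ≤ dotw c (u i) (u i) := dotw_nonneg h0
    have h3 : dotw c (u i) (u i) ^ 2 ≤ 1 := by nlinarith [hu i]
    have h4 : 3 * (2:ℝ) ^ d * dotw c (u i) (u i) ^ 2 ≤ 3 * 2 ^ d * 1 :=
      mul_le_mul_of_nonneg_left h3 (by positivity)
    calc ∑ ε : Fin d → Bool, (Φ i ε) ^ 4 ≤ 3 * 2 ^ d * dotw c (u i) (u i) ^ 2 := by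
          rw [hΦ]; exact h1
      _ ≤ 3 * D := by rw [hD]; linarith
  have M4v : ∀ j, ∑ ε : Fin d → Bool, (Ψ j ε) ^ 4 ≤ 3 * D := by
    intro j
    have h1 := sum_rads_pow_four (ι := Fin d) (fun z => Real.sqrt (c z) * v j z) Finset.univ
    rw [Fintype.card_fin, sqsum (v j)] at h1
    have h2 : 0 ≤ dotw c (v j) (v j) := dotw_nonneg h0
    have h3 : dotw c (v j) (v j) ^ 2 ≤ 1 := by nlinarith [hv j]
    have h4 : 3 * (2:ℝ) ^ d * dotw c (v j) (v j) ^ 2 ≤ 3 * 2 ^ d * 1 :=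
      mul_le_mul_of_nonneg_left h3 (by positivity)
    calc ∑ ε : Fin d → Bool, (Ψ j ε) ^ 4 ≤ 3 * 2 ^ d * dotw c (v j) (v j) ^ 2 := by
          rw [hΨ]; exact h1
      _ ≤ 3 * D := by rw [hD]; linarith
  -- the splitting of D * r
  have main : D * (∑ i, ∑ j, a i j * dotw c (u i) (v j))
      = (∑ i, ∑ j, a i j * (∑ ε : Fin d → Bool, trunc R (Φ i ε) * trunc R (Ψ j ε)))
        + (∑ i, ∑ j, a i j * (∑ ε : Fin d → Bool,
            trunc R (Φ i ε) * (Ψ j ε - trunc R (Ψ j ε))))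
        + (∑ i, ∑ j, a i j * (∑ ε : Fin d → Bool,
            (Φ i ε - trunc R (Φ i ε)) * Ψ j ε)) := by
    rw [Finset.mul_sum, ← Finset.sum_add_distrib, ← Finset.sum_add_distrib]
    refine Finset.sum_congr rfl fun i _ => ?_
    rw [Finset.mul_sum, ← Finset.sum_add_distrib, ← Finset.sum_add_distrib]
    refine Finset.sum_congr rfl fun j _ => ?_
    have hsplit : (∑ ε : Fin d → Bool, Φ i ε * Ψ j ε)
        = (∑ ε : Fin d → Bool, trunc R (Φ i ε) * trunc R (Ψ j ε))
          + (∑ ε : Fin d → Bool, trunc R (Φ i ε) * (Ψ j ε - trunc R (Ψ j ε)))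
          + (∑ ε : Fin d → Bool, (Φ i ε - trunc R (Φ i ε)) * Ψ j ε) := by
      rw [← Finset.sum_add_distrib, ← Finset.sum_add_distrib]
      exact Finset.sum_congr rfl fun ε _ => by ring
    have hm := M2 i j
    rw [hsplit] at hm
    linear_combination (-(a i j)) * hm
  -- bound the first term
  have B1 : (∑ i, ∑ j, a i j * (∑ ε : Fin d → Bool, trunc R (Φ i ε) * trunc R (Ψ j ε)))
      ≤ D * (48 * M) := by
    have hswap : (∑ i, ∑ j, a i j * (∑ ε : Fin d → Bool, trunc R (Φ i ε) * trunc R (Ψ j ε)))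
        = ∑ ε : Fin d → Bool, ∑ i, ∑ j, a i j * (trunc R (Φ i ε) * trunc R (Ψ j ε)) := by
      rw [← sum_swap3 (fun i j ε => a i j * (trunc R (Φ i ε) * trunc R (Ψ j ε)))]
      exact Finset.sum_congr rfl fun i _ => Finset.sum_congr rfl fun j _ =>
        Finset.mul_sum _ _ _
    rw [hswap]
    have hpt : ∀ ε : Fin d → Bool,
        ∑ i, ∑ j, a i j * (trunc R (Φ i ε) * trunc R (Ψ j ε)) ≤ 48 * M := by
      intro ε
      have hs : ∀ i, |trunc R (Φ i ε) / R| ≤ 1 := by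
        intro i
        rw [abs_div, abs_of_pos hR, div_le_one hR]
        exact abs_trunc_le hR _
      have ht : ∀ j, |trunc R (Ψ j ε) / R| ≤ 1 := by
        intro j
        rw [abs_div, abs_of_pos hR, div_le_one hR]
        exact abs_trunc_le hR _
      have hb := hM (fun i => trunc R (Φ i ε) / R) (fun j => trunc R (Ψ j ε) / R) hs ht
      have heq : ∑ i, ∑ j, a i j * (trunc R (Φ i ε) * trunc R (Ψ j ε))
          = R ^ 2 * ∑ i, ∑ j, a i j * ((trunc R (Φ i ε) / R) * (trunc R (Ψ j ε) / R)) := by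
        rw [Finset.mul_sum]
        refine Finset.sum_congr rfl fun i _ => ?_
        rw [Finset.mul_sum]
        refine Finset.sum_congr rfl fun j _ => ?_
        field_simp
      rw [heq, hR2]
      have hle : ∑ i, ∑ j, a i j * ((trunc R (Φ i ε) / R) * (trunc R (Ψ j ε) / R)) ≤ M :=
        le_trans (le_abs_self _) hb
      linarith
    calc ∑ ε : Fin d → Bool, ∑ i, ∑ j, a i j * (trunc R (Φ i ε) * trunc R (Ψ j ε))
        ≤ ∑ _ε : Fin d → Bool, 48 * M := Finset.sum_le_sum fun ε _ => hpt ε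
      _ = D * (48 * M) := by rw [Finset.sum_const, nsmul_eq_mul, hcard]
  -- second term
  have hc' : ∀ _z : Fin d → Bool, (0:ℝ) ≤ D⁻¹ := fun _ => inv_nonneg.2 hDpos.le
  have B2 : (∑ i, ∑ j, a i j * (∑ ε : Fin d → Bool,
        trunc R (Φ i ε) * (Ψ j ε - trunc R (Ψ j ε))))
      ≤ D / 4 * K := by
    set c' : (Fin d → Bool) → ℝ := fun _ => D⁻¹ with hc'def
    set u' : Fin n → (Fin d → Bool) → ℝ := fun i ε => trunc R (Φ i ε) with hu'def
    set v' : Fin m → (Fin d → Bool) → ℝ :=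
      fun j ε => 4 * (Ψ j ε - trunc R (Ψ j ε)) with hv'def
    have hu' : ∀ i, dotw c' (u' i) (u' i) ≤ 1 := by
      intro i
      simp only [dotw, hc'def, hu'def]
      calc ∑ ε : Fin d → Bool, D⁻¹ * (trunc R (Φ i ε) * trunc R (Φ i ε))
          ≤ ∑ ε : Fin d → Bool, D⁻¹ * (Φ i ε * Φ i ε) := by
            refine Finset.sum_le_sum fun ε _ => ?_
            refine mul_le_mul_of_nonneg_left ?_ (hc' ε)
            have := sq_trunc_le (Φ i ε) hR
            nlinarith
        _ = D⁻¹ * (D * dotw c (u i) (u i)) := by rw [← Finset.mul_sum, M2u i]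
        _ = dotw c (u i) (u i) := by field_simp
        _ ≤ 1 := hu i
    have hv' : ∀ j, dotw c' (v' j) (v' j) ≤ 1 := by
      intro j
      simp only [dotw, hc'def, hv'def]
      calc ∑ ε : Fin d → Bool, D⁻¹ * ((4 * (Ψ j ε - trunc R (Ψ j ε))) * (4 * (Ψ j ε - trunc R (Ψ j ε))))
          ≤ ∑ ε : Fin d → Bool, D⁻¹ * ((Ψ j ε) ^ 4 / 3) := by
            refine Finset.sum_le_sum fun ε _ => ?_
            refine mul_le_mul_of_nonneg_left ?_ (hc' ε)
            have h48 := sq_sub_trunc_le (Ψ j ε) hR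
            rw [hR2] at h48
            nlinarith
        _ = D⁻¹ * ((∑ ε : Fin d → Bool, (Ψ j ε) ^ 4) / 3) := by
            rw [← Finset.mul_sum, ← Finset.sum_div]
        _ ≤ D⁻¹ * ((3 * D) / 3) := by
            refine mul_le_mul_of_nonneg_left ?_ (inv_nonneg.2 hDpos.le)
            have := M4v j
            linarith
        _ = 1 := by field_simp
    have hmem : (∑ i, ∑ j, a i j * dotw c' (u' i) (v' j)) ∈ GS a :=
      mem_GS (Fin d → Bool) c' u' v' hc' hu' hv'
    have hrel : ∀ i j, (∑ ε : Fin d → Bool, trunc R (Φ i ε) * (Ψ j ε - trunc R (Ψ j ε)))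
        = D / 4 * dotw c' (u' i) (v' j) := by
      intro i j
      rw [dotw, Finset.mul_sum]
      refine Finset.sum_congr rfl fun ε _ => ?_
      rw [hc'def, hu'def, hv'def]
      field_simp
    calc (∑ i, ∑ j, a i j * (∑ ε : Fin d → Bool,
            trunc R (Φ i ε) * (Ψ j ε - trunc R (Ψ j ε))))
        = D / 4 * (∑ i, ∑ j, a i j * dotw c' (u' i) (v' j)) := by
          rw [Finset.mul_sum]
          refine Finset.sum_congr rfl fun i _ => ?_
          rw [Finset.mul_sum]
          refine Finset.sum_congr rfl fun j _ => ?_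
          rw [hrel i j]
          ring
      _ ≤ D / 4 * K := by
          refine mul_le_mul_of_nonneg_left (hK _ hmem) (by positivity)
  -- third term
  have B3 : (∑ i, ∑ j, a i j * (∑ ε : Fin d → Bool,
        (Φ i ε - trunc R (Φ i ε)) * Ψ j ε))
      ≤ D / 4 * K := by
    set c' : (Fin d → Bool) → ℝ := fun _ => D⁻¹ with hc'def
    set u' : Fin n → (Fin d → Bool) → ℝ :=
      fun i ε => 4 * (Φ i ε - trunc R (Φ i ε)) with hu'def
    have hu' : ∀ i, dotw c' (u' i) (u' i) ≤ 1 := by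
      intro i
      simp only [dotw, hc'def, hu'def]
      calc ∑ ε : Fin d → Bool, D⁻¹ * ((4 * (Φ i ε - trunc R (Φ i ε))) * (4 * (Φ i ε - trunc R (Φ i ε))))
          ≤ ∑ ε : Fin d → Bool, D⁻¹ * ((Φ i ε) ^ 4 / 3) := by
            refine Finset.sum_le_sum fun ε _ => ?_
            refine mul_le_mul_of_nonneg_left ?_ (hc' ε)
            have h48 := sq_sub_trunc_le (Φ i ε) hR
            rw [hR2] at h48
            nlinarith
        _ = D⁻¹ * ((∑ ε : Fin d → Bool, (Φ i ε) ^ 4) / 3) := by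
            rw [← Finset.mul_sum, ← Finset.sum_div]
        _ ≤ D⁻¹ * ((3 * D) / 3) := by
            refine mul_le_mul_of_nonneg_left ?_ (inv_nonneg.2 hDpos.le)
            have := M4u i
            linarith
        _ = 1 := by field_simp
    have hv' : ∀ j, dotw c' (Ψ j) (Ψ j) ≤ 1 := by
      intro j
      simp only [dotw, hc'def]
      calc ∑ ε : Fin d → Bool, D⁻¹ * (Ψ j ε * Ψ j ε)
          = D⁻¹ * (D * dotw c (v j) (v j)) := by rw [← Finset.mul_sum, M2v j]
        _ = dotw c (v j) (v j) := by field_simp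
        _ ≤ 1 := hv j
    have hmem : (∑ i, ∑ j, a i j * dotw c' (u' i) (Ψ j)) ∈ GS a :=
      mem_GS (Fin d → Bool) c' u' Ψ hc' hu' hv'
    have hrel : ∀ i j, (∑ ε : Fin d → Bool, (Φ i ε - trunc R (Φ i ε)) * Ψ j ε)
        = D / 4 * dotw c' (u' i) (Ψ j) := by
      intro i j
      rw [dotw, Finset.mul_sum]
      refine Finset.sum_congr rfl fun ε _ => ?_
      rw [hc'def, hu'def]
      field_simp
    calc (∑ i, ∑ j, a i j * (∑ ε : Fin d → Bool,
            (Φ i ε - trunc R (Φ i ε)) * Ψ j ε))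
        = D / 4 * (∑ i, ∑ j, a i j * dotw c' (u' i) (Ψ j)) := by
          rw [Finset.mul_sum]
          refine Finset.sum_congr rfl fun i _ => ?_
          rw [Finset.mul_sum]
          refine Finset.sum_congr rfl fun j _ => ?_
          rw [hrel i j]
          ring
      _ ≤ D / 4 * K := by
          refine mul_le_mul_of_nonneg_left (hK _ hmem) (by positivity)
  -- put everything together
  have htot : D * (∑ i, ∑ j, a i j * dotw c (u i) (v j))
      ≤ D * (48 * M + K / 2) := by
    rw [main]
    have : D * (48 * M + K / 2) = D * (48 * M) + D / 4 * K + D / 4 * K := by ring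
    rw [this]
    exact add_le_add (add_le_add B1 B2) B3
  exact le_of_mul_le_mul_left htot hDpos

lemma groth_main {a : Fin n → Fin m → ℝ} {M : ℝ}
    (hM : ∀ (s : Fin n → ℝ) (t : Fin m → ℝ), (∀ i, |s i| ≤ 1) → (∀ j, |t j| ≤ 1) →
      |∑ i, ∑ j, a i j * (s i * t j)| ≤ M) :
    ∀ r ∈ GS a, r ≤ 96 * M := by
  have hne : (GS a).Nonempty := ⟨0, zero_mem_GS a⟩
  have hbdd := GS_bddAbove a
  have hK : ∀ r' ∈ GS a, r' ≤ sSup (GS a) := fun r' h => le_csSup hbdd h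
  have h1 : sSup (GS a) ≤ 48 * M + sSup (GS a) / 2 :=
    csSup_le hne (GS_le_boot hM hK)
  intro r hr
  have h2 := hK r hr
  linarith

end Boot


section C0Part

open Filter Topology ZeroAtInftyContinuousMap

/-- the `i`-th basis vector of `c₀` -/
noncomputable def eC0 (i : ℕ) : C₀(ℕ, ℝ) :=
  ⟨⟨fun k => if k = i then 1 else 0, continuous_of_discreteTopology⟩, by
    rw [cocompact_eq_atTop]
    refine Tendsto.congr' ?_ tendsto_const_nhds
    filter_upwards [Filter.eventually_ge_atTop (i + 1)] with k hk
    exact (if_neg (by omega)).symm⟩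

@[simp] lemma eC0_apply (i k : ℕ) : eC0 i k = if k = i then 1 else 0 := rfl

/-- truncation of an element of `c₀` to its first `n` coordinates -/
noncomputable def PC0 (n : ℕ) (x : C₀(ℕ, ℝ)) : C₀(ℕ, ℝ) :=
  ⟨⟨fun k => if k < n then x k else 0, continuous_of_discreteTopology⟩, by
    rw [cocompact_eq_atTop]
    refine Tendsto.congr' ?_ tendsto_const_nhds
    filter_upwards [Filter.eventually_ge_atTop n] with k hk
    exact (if_neg (by omega)).symm⟩

@[simp] lemma PC0_apply (n : ℕ) (x : C₀(ℕ, ℝ)) (k : ℕ) :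
    PC0 n x k = if k < n then x k else 0 := rfl

lemma C0_norm_le {f : C₀(ℕ, ℝ)} {C : ℝ} (h0 : 0 ≤ C) (h : ∀ k, |f k| ≤ C) : ‖f‖ ≤ C := by
  rw [← norm_toBCF_eq_norm]
  refine (BoundedContinuousFunction.norm_le h0).2 fun k => ?_
  have hk : f.toBCF k = f k := rfl
  rw [hk, Real.norm_eq_abs]
  exact h k

lemma C0_abs_apply_le (f : C₀(ℕ, ℝ)) (k : ℕ) : |f k| ≤ ‖f‖ := by
  rw [← norm_toBCF_eq_norm]
  have hk : f.toBCF k = f k := rfl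
  calc |f k| = ‖f.toBCF k‖ := by rw [hk, Real.norm_eq_abs]
    _ ≤ ‖f.toBCF‖ := BoundedContinuousFunction.norm_coe_le_norm _ _

/-- evaluation at a coordinate, as a continuous linear functional on `c₀` -/
noncomputable def evalC0 (i : ℕ) : C₀(ℕ, ℝ) →L[ℝ] ℝ :=
  LinearMap.mkContinuous
    { toFun := fun f => f i
      map_add' := fun f g => by simp
      map_smul' := fun r f => by simp }
    1 (fun f => by
      show ‖f i‖ ≤ 1 * ‖f‖
      rw [one_mul, Real.norm_eq_abs]
      exact C0_abs_apply_le f i)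

@[simp] lemma evalC0_apply (i : ℕ) (f : C₀(ℕ, ℝ)) : evalC0 i f = f i := rfl

lemma evalC0_norm_le (i : ℕ) : ‖evalC0 i‖ ≤ 1 :=
  LinearMap.mkContinuous_norm_le _ zero_le_one _

lemma weakNorm_eq {E : Type*} [NormedAddCommGroup E] [NormedSpace ℝ E] {m : ℕ}
    (x : Fin m → E) :
    weakNorm 2 x
      = ⨆ φ : {φ : E →L[ℝ] ℝ // ‖φ‖ ≤ 1}, Real.sqrt (∑ j, (φ.1 (x j)) ^ 2) := by
  unfold weakNorm
  congr 1
  funext φ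
  rw [← Real.sqrt_eq_rpow]
  congr 1
  exact Finset.sum_congr rfl fun j _ => by rw [Real.rpow_two, Real.norm_eq_abs, sq_abs]

lemma weakNorm_bdd {E : Type*} [NormedAddCommGroup E] [NormedSpace ℝ E] {m : ℕ}
    (x : Fin m → E) :
    BddAbove (Set.range fun φ : {φ : E →L[ℝ] ℝ // ‖φ‖ ≤ 1} =>
      Real.sqrt (∑ j, (φ.1 (x j)) ^ 2)) := by
  refine ⟨Real.sqrt (∑ j, ‖x j‖ ^ 2), ?_⟩
  rintro r ⟨φ, rfl⟩
  apply Real.sqrt_le_sqrt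
  refine Finset.sum_le_sum fun j _ => ?_
  have h1 : |φ.1 (x j)| ≤ ‖x j‖ := by
    calc |φ.1 (x j)| = ‖φ.1 (x j)‖ := (Real.norm_eq_abs _).symm
      _ ≤ ‖φ.1‖ * ‖x j‖ := φ.1.le_opNorm _
      _ ≤ 1 * ‖x j‖ := mul_le_mul_of_nonneg_right φ.2 (norm_nonneg _)
      _ = ‖x j‖ := one_mul _
  rw [← sq_abs]
  exact pow_le_pow_left₀ (abs_nonneg _) h1 2

lemma sqrt_le_weakNorm {E : Type*} [NormedAddCommGroup E] [NormedSpace ℝ E] {m : ℕ}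
    (x : Fin m → E) (φ : E →L[ℝ] ℝ) (hφ : ‖φ‖ ≤ 1) :
    Real.sqrt (∑ j, (φ (x j)) ^ 2) ≤ weakNorm 2 x := by
  rw [weakNorm_eq]
  exact le_ciSup (weakNorm_bdd x) (⟨φ, hφ⟩ : {φ : E →L[ℝ] ℝ // ‖φ‖ ≤ 1})

lemma weakNorm_nonneg {E : Type*} [NormedAddCommGroup E] [NormedSpace ℝ E] {m : ℕ}
    (x : Fin m → E) : 0 ≤ weakNorm 2 x :=
  le_trans (Real.sqrt_nonneg _) (sqrt_le_weakNorm x 0 (by simp))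

lemma sum_smul_eC0_apply {n : ℕ} (s : Fin n → ℝ) (k : ℕ) :
    (∑ i : Fin n, s i • eC0 (i : ℕ)) k = if h : k < n then s ⟨k, h⟩ else 0 := by
  rw [show (∑ i : Fin n, s i • eC0 (i : ℕ)) k = evalC0 k (∑ i : Fin n, s i • eC0 (i : ℕ))
    from rfl, map_sum]
  simp only [map_smul, evalC0_apply, smul_eq_mul, eC0_apply]
  by_cases h : k < n
  · rw [dif_pos h]
    rw [Finset.sum_eq_single (⟨k, h⟩ : Fin n)]
    · simp
    · intro i _ hne
      rw [if_neg, mul_zero]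
      exact fun hk => hne (Fin.ext hk.symm)
    · exact fun hmem => absurd (Finset.mem_univ _) hmem
  · rw [dif_neg h]
    refine Finset.sum_eq_zero fun i _ => ?_
    rw [if_neg, mul_zero]
    intro hk
    exact h (hk ▸ i.isLt)

lemma PC0_eq_sum {n : ℕ} (x : C₀(ℕ, ℝ)) :
    PC0 n x = ∑ i : Fin n, x (i : ℕ) • eC0 (i : ℕ) := by
  ext k
  rw [sum_smul_eC0_apply (fun i => x (i : ℕ)) k, PC0_apply]
  by_cases h : k < n
  · rw [if_pos h, dif_pos h]
  · rw [if_neg h, dif_neg h]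

lemma bilin_rep (A : C₀(ℕ, ℝ) →L[ℝ] C₀(ℕ, ℝ) →L[ℝ] ℝ) {n : ℕ} (s t : Fin n → ℝ) :
    A (∑ i : Fin n, s i • eC0 (i : ℕ)) (∑ j : Fin n, t j • eC0 (j : ℕ))
      = ∑ i : Fin n, ∑ j : Fin n, (A (eC0 (i : ℕ)) (eC0 (j : ℕ))) * (s i * t j) := by
  simp only [map_sum, map_smul, ContinuousLinearMap.sum_apply,
    ContinuousLinearMap.smul_apply, smul_eq_mul, Finset.mul_sum]
  rw [Finset.sum_comm]
  refine Finset.sum_congr rfl fun i _ => Finset.sum_congr rfl fun j _ => ?_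
  ring

lemma norm_sum_smul_eC0_le {n : ℕ} (s : Fin n → ℝ) (hs : ∀ i, |s i| ≤ 1) :
    ‖∑ i : Fin n, s i • eC0 (i : ℕ)‖ ≤ 1 := by
  refine C0_norm_le zero_le_one fun k => ?_
  rw [sum_smul_eC0_apply]
  split
  · exact hs _
  · simp

lemma exists_bound (A : C₀(ℕ, ℝ) →L[ℝ] C₀(ℕ, ℝ) →L[ℝ] ℝ) :
    ∃ M : ℝ, 0 ≤ M ∧ ∀ U V : C₀(ℕ, ℝ), ‖U‖ ≤ 1 → ‖V‖ ≤ 1 → |A U V| ≤ M := by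
  have hpt : ∀ V : C₀(ℕ, ℝ), ∃ C : ℝ, ∀ u : {u : C₀(ℕ, ℝ) // ‖u‖ ≤ 1}, ‖A u.1 V‖ ≤ C := by
    intro V
    have hcont : Continuous fun u : C₀(ℕ, ℝ) => A u V :=
      (continuous_eval_const V).comp A.continuous
    set BV : C₀(ℕ, ℝ) →L[ℝ] ℝ :=
      { toLinearMap :=
        { toFun := fun u => A u V
          map_add' := fun u₁ u₂ => by simp
          map_smul' := fun r u => by simp }
        cont := hcont } with hBVdef
    refine ⟨‖BV‖, fun u => ?_⟩
    calc ‖A u.1 V‖ = ‖BV u.1‖ := rfl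
      _ ≤ ‖BV‖ * ‖u.1‖ := BV.le_opNorm u.1
      _ ≤ ‖BV‖ * 1 := mul_le_mul_of_nonneg_left u.2 (ContinuousLinearMap.opNorm_nonneg BV)
      _ = ‖BV‖ := mul_one _
  obtain ⟨C', hC'⟩ :=
    banach_steinhaus (g := fun u : {u : C₀(ℕ, ℝ) // ‖u‖ ≤ 1} => A u.1) hpt
  refine ⟨max C' 0, le_max_right _ _, fun U V hU hV => ?_⟩
  have h1 : ‖A U‖ ≤ C' := hC' ⟨U, hU⟩
  have h0 : 0 ≤ C' := le_trans (ContinuousLinearMap.opNorm_nonneg (A U)) h1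
  calc |A U V| = ‖A U V‖ := (Real.norm_eq_abs _).symm
    _ ≤ ‖A U‖ * ‖V‖ := (A U).le_opNorm V
    _ ≤ C' * 1 := mul_le_mul h1 hV (norm_nonneg _) h0
    _ = C' := mul_one _
    _ ≤ max C' 0 := le_max_left _ _

lemma abs_bilin_le (A : C₀(ℕ, ℝ) →L[ℝ] C₀(ℕ, ℝ) →L[ℝ] ℝ) {M : ℝ}
    (hM01 : ∀ U V : C₀(ℕ, ℝ), ‖U‖ ≤ 1 → ‖V‖ ≤ 1 → |A U V| ≤ M) {n : ℕ}
    (s t : Fin n → ℝ) (hs : ∀ i, |s i| ≤ 1) (ht : ∀ j, |t j| ≤ 1) :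
    |∑ i : Fin n, ∑ j : Fin n, (A (eC0 (i : ℕ)) (eC0 (j : ℕ))) * (s i * t j)| ≤ M := by
  rw [← bilin_rep A s t]
  exact hM01 _ _ (norm_sum_smul_eC0_le s hs) (norm_sum_smul_eC0_le t ht)

lemma PC0_tendsto (x : C₀(ℕ, ℝ)) : Tendsto (fun n => PC0 n x) atTop (𝓝 x) := by
  rw [Metric.tendsto_atTop]
  intro δ hδ
  have hx : Tendsto (fun k => x k) atTop (𝓝 0) := by
    have h := zero_at_infty x
    rwa [cocompact_eq_atTop] at h
  rw [Metric.tendsto_atTop] at hx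
  obtain ⟨N, hN⟩ := hx (δ / 2) (by linarith)
  refine ⟨N, fun n hn => ?_⟩
  have hb : ‖PC0 n x - x‖ ≤ δ / 2 := by
    refine C0_norm_le (by linarith) fun k => ?_
    have hsub : (PC0 n x - x) k = PC0 n x k - x k := by
      rw [ZeroAtInftyContinuousMap.coe_sub]; rfl
    rw [hsub, PC0_apply]
    by_cases hk : k < n
    · rw [if_pos hk, sub_self, abs_zero]
      linarith
    · rw [if_neg hk, zero_sub, abs_neg]
      have h2 := hN k (by omega)
      rw [Real.dist_eq, sub_zero] at h2
      linarith
  rw [dist_eq_norm]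
  linarith

end C0Part

end GrothAux


open GrothAux Filter Topology in
/-- Every continuous bilinear form `A : c₀ × c₀ → ℝ` is 2-dominated: there is `C ≥ 0` with
`∑ₖ |A (x k) (y k)| ≤ C ‖(x k)‖_{w,2} ‖(y k)‖_{w,2}` for all finite families in `c₀`. -/
theorem bilinear_form_on_c0_two_dominated (A : C₀(ℕ, ℝ) →L[ℝ] C₀(ℕ, ℝ) →L[ℝ] ℝ) :
    ∃ C : ℝ, 0 ≤ C ∧ ∀ (N : ℕ) (x y : Fin N → C₀(ℕ, ℝ)),
      ∑ k, |A (x k) (y k)| ≤ C * weakNorm 2 x * weakNorm 2 y := by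
  obtain ⟨M, hM0, hMb⟩ := exists_bound A
  refine ⟨96 * M, by positivity, fun N x y => ?_⟩
  set w1 := weakNorm 2 x with hw1def
  set w2 := weakNorm 2 y with hw2def
  have hw1 : 0 ≤ w1 := weakNorm_nonneg x
  have hw2 : 0 ≤ w2 := weakNorm_nonneg y
  by_cases hz1 : w1 = 0
  · have hx0 : ∀ k, x k = 0 := by
      intro k
      ext i
      have hb := sqrt_le_weakNorm x (evalC0 i) (evalC0_norm_le i)
      have h2 : (evalC0 i (x k)) ^ 2 ≤ ∑ j, (evalC0 i (x j)) ^ 2 :=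
        Finset.single_le_sum (f := fun j => (evalC0 i (x j)) ^ 2)
          (fun j _ => sq_nonneg _) (Finset.mem_univ k)
      have h3 : Real.sqrt ((evalC0 i (x k)) ^ 2) ≤ w1 :=
        le_trans (Real.sqrt_le_sqrt h2) hb
      rw [Real.sqrt_sq_eq_abs, hz1] at h3
      have h4 : evalC0 i (x k) = 0 := abs_nonpos_iff.mp h3
      simpa using h4
    have hs0 : ∑ k, |A (x k) (y k)| = 0 :=
      Finset.sum_eq_zero fun k _ => by rw [hx0 k]; simp
    rw [hs0, hz1]
    simp
  by_cases hz2 : w2 = 0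
  · have hy0 : ∀ k, y k = 0 := by
      intro k
      ext i
      have hb := sqrt_le_weakNorm y (evalC0 i) (evalC0_norm_le i)
      have h2 : (evalC0 i (y k)) ^ 2 ≤ ∑ j, (evalC0 i (y j)) ^ 2 :=
        Finset.single_le_sum (f := fun j => (evalC0 i (y j)) ^ 2)
          (fun j _ => sq_nonneg _) (Finset.mem_univ k)
      have h3 : Real.sqrt ((evalC0 i (y k)) ^ 2) ≤ w2 :=
        le_trans (Real.sqrt_le_sqrt h2) hb
      rw [Real.sqrt_sq_eq_abs, hz2] at h3
      have h4 : evalC0 i (y k) = 0 := abs_nonpos_iff.mp h3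
      simpa using h4
    have hs0 : ∑ k, |A (x k) (y k)| = 0 :=
      Finset.sum_eq_zero fun k _ => by rw [hy0 k]; simp
    rw [hs0, hz2]
    simp
  have hp1 : 0 < w1 := lt_of_le_of_ne hw1 (Ne.symm hz1)
  have hp2 : 0 < w2 := lt_of_le_of_ne hw2 (Ne.symm hz2)
  have step1 : ∀ n : ℕ, ∑ k, |A (PC0 n (x k)) (PC0 n (y k))| ≤ 96 * M * w1 * w2 := by
    intro n
    set ε : Fin N → ℝ :=
      fun k => if A (PC0 n (x k)) (PC0 n (y k)) < 0 then -1 else 1 with hεdef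
    have hε2 : ∀ k, ε k * ε k = 1 := by
      intro k; simp only [hεdef]; split_ifs <;> norm_num
    have habs : ∀ k, |A (PC0 n (x k)) (PC0 n (y k))|
        = ε k * A (PC0 n (x k)) (PC0 n (y k)) := by
      intro k; simp only [hεdef]; split_ifs with h
      · rw [abs_of_neg h]; ring
      · rw [abs_of_nonneg (not_lt.1 h)]; ring
    have hrep : ∀ k, A (PC0 n (x k)) (PC0 n (y k))
        = ∑ i : Fin n, ∑ j : Fin n,
            (A (eC0 (i : ℕ)) (eC0 (j : ℕ))) * (x k (i : ℕ) * y k (j : ℕ)) := by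
      intro k
      rw [PC0_eq_sum (x k), PC0_eq_sum (y k), bilin_rep]
    have hMmat : ∀ (s t : Fin n → ℝ), (∀ i, |s i| ≤ 1) → (∀ j, |t j| ≤ 1) →
        |∑ i : Fin n, ∑ j : Fin n, (A (eC0 (i : ℕ)) (eC0 (j : ℕ))) * (s i * t j)| ≤ M :=
      fun s t hs ht => abs_bilin_le A hMb s t hs ht
    have hcx : ∀ i : Fin n, ∑ k, (x k (i : ℕ)) ^ 2 ≤ w1 ^ 2 := by
      intro i
      have hb := sqrt_le_weakNorm x (evalC0 (i : ℕ)) (evalC0_norm_le _)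
      have h0 : 0 ≤ ∑ j, (evalC0 (i : ℕ) (x j)) ^ 2 :=
        Finset.sum_nonneg fun j _ => sq_nonneg _
      have h1 := pow_le_pow_left₀ (Real.sqrt_nonneg _) hb 2
      rw [Real.sq_sqrt h0] at h1
      simpa using h1
    have hcy : ∀ j : Fin n, ∑ k, (y k (j : ℕ)) ^ 2 ≤ w2 ^ 2 := by
      intro j
      have hb := sqrt_le_weakNorm y (evalC0 (j : ℕ)) (evalC0_norm_le _)
      have h0 : 0 ≤ ∑ i, (evalC0 (j : ℕ) (y i)) ^ 2 :=
        Finset.sum_nonneg fun i _ => sq_nonneg _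
      have h1 := pow_le_pow_left₀ (Real.sqrt_nonneg _) hb 2
      rw [Real.sq_sqrt h0] at h1
      simpa using h1
    set c1 : Fin N → ℝ := fun _ => (1 : ℝ) with hc1def
    set u : Fin n → Fin N → ℝ := fun i k => ε k * x k (i : ℕ) / w1 with hudef
    set v : Fin n → Fin N → ℝ := fun j k => y k (j : ℕ) / w2 with hvdef
    have hcu : ∀ i, dotw c1 (u i) (u i) ≤ 1 := by
      intro i
      have he : dotw c1 (u i) (u i) = (∑ k, (x k (i : ℕ)) ^ 2) / w1 ^ 2 := by
        simp only [dotw, hc1def, hudef]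
        rw [Finset.sum_div]
        refine Finset.sum_congr rfl fun k _ => ?_
        calc (1 : ℝ) * ((ε k * x k (i : ℕ) / w1) * (ε k * x k (i : ℕ) / w1))
            = (ε k * ε k) * ((x k (i : ℕ)) ^ 2 / w1 ^ 2) := by ring
          _ = (x k (i : ℕ)) ^ 2 / w1 ^ 2 := by rw [hε2 k, one_mul]
      rw [he, div_le_one (by positivity)]
      exact hcx i
    have hcv : ∀ j, dotw c1 (v j) (v j) ≤ 1 := by
      intro j
      have he : dotw c1 (v j) (v j) = (∑ k, (y k (j : ℕ)) ^ 2) / w2 ^ 2 := by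
        simp only [dotw, hc1def, hvdef]
        rw [Finset.sum_div]
        refine Finset.sum_congr rfl fun k _ => ?_
        ring
      rw [he, div_le_one (by positivity)]
      exact hcy j
    have hmem := mem_GS (a := fun i j : Fin n => A (eC0 (i : ℕ)) (eC0 (j : ℕ)))
      (Fin N) c1 u v (fun _ => zero_le_one) hcu hcv
    have hg := groth_main (a := fun i j : Fin n => A (eC0 (i : ℕ)) (eC0 (j : ℕ)))
      hMmat _ hmem
    have hterm : ∀ i j : Fin n, (A (eC0 (i : ℕ)) (eC0 (j : ℕ)))
        * (∑ k, ε k * (x k (i : ℕ) * y k (j : ℕ)))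
        = w1 * w2 * ((A (eC0 (i : ℕ)) (eC0 (j : ℕ))) * dotw c1 (u i) (v j)) := by
      intro i j
      simp only [dotw, hc1def, hudef, hvdef]
      calc (A (eC0 (i : ℕ)) (eC0 (j : ℕ))) * (∑ k, ε k * (x k (i : ℕ) * y k (j : ℕ)))
          = ∑ k, (A (eC0 (i : ℕ)) (eC0 (j : ℕ))) * (ε k * (x k (i : ℕ) * y k (j : ℕ))) :=
            Finset.mul_sum _ _ _
        _ = ∑ k, w1 * w2 * ((A (eC0 (i : ℕ)) (eC0 (j : ℕ)))
              * ((1 : ℝ) * ((ε k * x k (i : ℕ) / w1) * (y k (j : ℕ) / w2)))) := by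
            refine Finset.sum_congr rfl fun k _ => ?_
            have c1 : w1 * w1⁻¹ = 1 := mul_inv_cancel₀ (ne_of_gt hp1)
            have c2 : w2 * w2⁻¹ = 1 := mul_inv_cancel₀ (ne_of_gt hp2)
            linear_combination
              (-(A (eC0 (i : ℕ)) (eC0 (j : ℕ)) * (ε k * (x k (i : ℕ) * y k (j : ℕ)))
                * (w2 * w2⁻¹))) * c1
              + (-(A (eC0 (i : ℕ)) (eC0 (j : ℕ)) * (ε k * (x k (i : ℕ) * y k (j : ℕ))))) * c2
        _ = w1 * w2 * ((A (eC0 (i : ℕ)) (eC0 (j : ℕ)))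
              * ∑ k, (1 : ℝ) * ((ε k * x k (i : ℕ) / w1) * (y k (j : ℕ) / w2))) := by
            conv_rhs => rw [Finset.mul_sum, Finset.mul_sum]
    calc ∑ k, |A (PC0 n (x k)) (PC0 n (y k))|
        = ∑ k, ε k * A (PC0 n (x k)) (PC0 n (y k)) :=
          Finset.sum_congr rfl fun k _ => habs k
      _ = ∑ k, ∑ i : Fin n, ∑ j : Fin n,
            (A (eC0 (i : ℕ)) (eC0 (j : ℕ))) * (ε k * (x k (i : ℕ) * y k (j : ℕ))) := by
          refine Finset.sum_congr rfl fun k _ => ?_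
          rw [hrep k, Finset.mul_sum]
          refine Finset.sum_congr rfl fun i _ => ?_
          rw [Finset.mul_sum]
          refine Finset.sum_congr rfl fun j _ => ?_
          ring
      _ = ∑ i : Fin n, ∑ j : Fin n, ∑ k,
            (A (eC0 (i : ℕ)) (eC0 (j : ℕ))) * (ε k * (x k (i : ℕ) * y k (j : ℕ))) :=
          (sum_swap3 _).symm
      _ = ∑ i : Fin n, ∑ j : Fin n, w1 * w2
            * ((A (eC0 (i : ℕ)) (eC0 (j : ℕ))) * dotw c1 (u i) (v j)) := by
          refine Finset.sum_congr rfl fun i _ => Finset.sum_congr rfl fun j _ => ?_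
          rw [← Finset.mul_sum]
          exact hterm i j
      _ = w1 * w2 * (∑ i : Fin n, ∑ j : Fin n,
            (A (eC0 (i : ℕ)) (eC0 (j : ℕ))) * dotw c1 (u i) (v j)) := by
          rw [Finset.mul_sum]
          exact Finset.sum_congr rfl fun i _ => (Finset.mul_sum _ _ _).symm
      _ ≤ w1 * w2 * (96 * M) := mul_le_mul_of_nonneg_left hg (by positivity)
      _ = 96 * M * w1 * w2 := by ring
  have hlim : Tendsto (fun n => ∑ k, |A (PC0 n (x k)) (PC0 n (y k))|) atTop
      (𝓝 (∑ k, |A (x k) (y k)|)) := by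
    refine tendsto_finset_sum _ fun k _ => ?_
    have h1 : Tendsto (fun n => PC0 n (x k)) atTop (𝓝 (x k)) := PC0_tendsto _
    have h2 : Tendsto (fun n => PC0 n (y k)) atTop (𝓝 (y k)) := PC0_tendsto _
    have h3 : Tendsto (fun n => A (PC0 n (x k))) atTop (𝓝 (A (x k))) :=
      (A.continuous.tendsto _).comp h1
    have h4 : Tendsto (fun n => A (PC0 n (x k)) (PC0 n (y k))) atTop
        (𝓝 (A (x k) (y k))) := by
      have hb : Continuous fun p : (C₀(ℕ, ℝ) →L[ℝ] ℝ) × C₀(ℕ, ℝ) => p.1 p.2 :=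
        isBoundedBilinearMap_apply.continuous
      exact (hb.tendsto _).comp (h3.prodMk_nhds h2)
    exact (continuous_abs.tendsto _).comp h4
  exact le_of_tendsto hlim (Filter.Eventually.of_forall step1)
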